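/- Let D = {(x, x_d) : x_d > φ(x)} where φ : ℝ^{d-1} → ℝ is C¹ with modulus of continuity θ for ∇φ (|∇φ(x) - ∇φ(y)| ≤ θ(|x-y|)). Let p ∈ D and r > 0 with r θ(r) ≤ dist(p, ∂D). Then for every boundary point X = (x, φ(x)) ∈ B_r(p) ∩ ∂D, ⟨X - p, n_D(X)⟩ ≥ 0, where n_D(X) = (∇φ(x), -1)/√(1+|∇φ(x)|²) is the outer unit normal. -/

import Mathlib

open Metric

local notation "⟪" x ", " y "⟫" => inner (𝕜 := ℝ) x y

/-- Projection of `ℝ^{n+1}` onto the first `n` coordinates. -/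
def proj (n : ℕ) (x : EuclideanSpace ℝ (Fin (n + 1))) : EuclideanSpace ℝ (Fin n) :=
  WithLp.toLp 2 (fun i => x (Fin.castSucc i))

/-- The graph domain `D = {(x, x_d) : x_d > φ(x)}`. -/
def graphDomain (n : ℕ) (φ : EuclideanSpace ℝ (Fin n) → ℝ) :
    Set (EuclideanSpace ℝ (Fin (n + 1))) :=
  {x | φ (proj n x) < x (Fin.last n)}

/-- The graph boundary `∂D = {(x, x_d) : x_d = φ(x)}`. -/
def graphBdry (n : ℕ) (φ : EuclideanSpace ℝ (Fin n) → ℝ) :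
    Set (EuclideanSpace ℝ (Fin (n + 1))) :=
  {x | x (Fin.last n) = φ (proj n x)}

/-- The outer unit normal `n_D(X) = (∇φ(x), -1)/√(1+|∇φ(x)|²)` at a boundary point. -/
noncomputable def outerNormal (n : ℕ) (φ : EuclideanSpace ℝ (Fin n) → ℝ)
    (x : EuclideanSpace ℝ (Fin (n + 1))) : EuclideanSpace ℝ (Fin (n + 1)) :=
  (Real.sqrt (1 + ‖gradient φ (proj n x)‖ ^ 2))⁻¹ •
    (WithLp.toLp 2 (Fin.snoc (fun i => gradient φ (proj n x) i) (-1)) : EuclideanSpace ℝ (Fin (n + 1)))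

lemma taylor_aux {n : ℕ} (φ : EuclideanSpace ℝ (Fin n) → ℝ) (θ : ℝ → ℝ)
    (hφ : ContDiff ℝ 1 φ) (hθmono : Monotone θ)
    (hmod : ∀ x y, ‖gradient φ x - gradient φ y‖ ≤ θ ‖x - y‖)
    (a b : EuclideanSpace ℝ (Fin n)) :
    |φ b - φ a - ⟪gradient φ a, b - a⟫| ≤ θ ‖b - a‖ * ‖b - a‖ := by
  set L : EuclideanSpace ℝ (Fin n) → (EuclideanSpace ℝ (Fin n) →L[ℝ] ℝ) :=
    fun c => (InnerProductSpace.toDual ℝ _) (gradient φ c) with hL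
  have hdiff : ∀ c ∈ segment ℝ a b, HasFDerivWithinAt φ (L c) (segment ℝ a b) c := by
    intro c _
    exact ((hφ.differentiable one_ne_zero c).hasGradientAt.hasFDerivAt).hasFDerivWithinAt
  have hbound : ∀ c ∈ segment ℝ a b, ‖L c - L a‖ ≤ θ ‖b - a‖ := by
    intro c hc
    have h1 : ‖L c - L a‖ = ‖gradient φ c - gradient φ a‖ := by
      rw [hL, ← map_sub]
      exact (InnerProductSpace.toDual ℝ _).norm_map _
    rw [h1]
    refine (hmod c a).trans (hθmono ?_)
    obtain ⟨u, v, hu, hv, huv, rfl⟩ := hc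
    have : u • a + v • b - a = v • (b - a) := by
      have : u = 1 - v := by linarith
      rw [this]; module
    rw [this, norm_smul, Real.norm_eq_abs, abs_of_nonneg hv]
    nlinarith [norm_nonneg (b - a)]
  have key := Convex.norm_image_sub_le_of_norm_hasFDerivWithin_le' (f := φ) (f' := L)
    (φ := L a) (C := θ ‖b - a‖) hdiff hbound (convex_segment a b)
    (left_mem_segment ℝ a b) (right_mem_segment ℝ a b)
  have hLa : L a (b - a) = ⟪gradient φ a, b - a⟫ := by
    rw [hL]; exact InnerProductSpace.toDual_apply_apply
  rw [hLa] at key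
  simpa [Real.norm_eq_abs] using key

lemma norm_proj_le (n : ℕ) (y : EuclideanSpace ℝ (Fin (n + 1))) : ‖proj n y‖ ≤ ‖y‖ := by
  rw [EuclideanSpace.norm_eq, EuclideanSpace.norm_eq, Fin.sum_univ_castSucc]
  apply Real.sqrt_le_sqrt
  have : (0:ℝ) ≤ ‖y (Fin.last n)‖ ^ 2 := sq_nonneg _
  simp only [proj, PiLp.toLp_apply]
  linarith

/-- For a `C¹` graph domain whose gradient has modulus of continuity `θ`, if
`r θ(r) ≤ dist(p, ∂D)` then every boundary point `X ∈ B_r(p) ∩ ∂D` satisfies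
`⟨X - p, n_D(X)⟩ ≥ 0`. -/
theorem statement9 (n : ℕ) (φ : EuclideanSpace ℝ (Fin n) → ℝ) (θ : ℝ → ℝ)
    (hφ : ContDiff ℝ 1 φ) (hθmono : Monotone θ) (hθ0 : ∀ s, 0 ≤ θ s)
    (hmod : ∀ x y, ‖gradient φ x - gradient φ y‖ ≤ θ ‖x - y‖)
    (p : EuclideanSpace ℝ (Fin (n + 1))) (hp : p ∈ graphDomain n φ)
    (r : ℝ) (hr : 0 < r)
    (hcrit : r * θ r ≤ infDist p (graphBdry n φ)) :
    ∀ X ∈ graphBdry n φ ∩ ball p r, (0 : ℝ) ≤ ⟪X - p, outerNormal n φ X⟫ := by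
  rintro X ⟨hXb, hXr⟩
  set x : EuclideanSpace ℝ (Fin n) := proj n X with hx
  set x₀ : EuclideanSpace ℝ (Fin n) := proj n p with hx₀
  set g : EuclideanSpace ℝ (Fin n) := gradient φ x with hg
  have hc0 : (0:ℝ) ≤ (Real.sqrt (1 + ‖g‖ ^ 2))⁻¹ := inv_nonneg.mpr (Real.sqrt_nonneg _)
  -- the inner product formula
  have hinner : ⟪X - p, outerNormal n φ X⟫
      = (Real.sqrt (1 + ‖g‖ ^ 2))⁻¹ *
        ((∑ i : Fin n, (x i - x₀ i) * g i) + (p (Fin.last n) - X (Fin.last n))) := by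
    rw [outerNormal, real_inner_smul_right, ← hx, ← hg]
    congr 1
    rw [PiLp.inner_apply, Fin.sum_univ_castSucc]
    simp only [PiLp.toLp_apply, Fin.snoc_castSucc, Fin.snoc_last, PiLp.sub_apply, RCLike.inner_apply,
      starRingEnd_apply, star_trivial]
    have hxx : ∀ i : Fin n, X (Fin.castSucc i) = x i := fun i => rfl
    have hxx0 : ∀ i : Fin n, p (Fin.castSucc i) = x₀ i := fun i => rfl
    simp only [hxx, hxx0]
    rw [Finset.sum_congr rfl (fun i _ => (by ring : g i * (x i - x₀ i) = (x i - x₀ i) * g i))]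
    ring
  rw [hinner]
  apply mul_nonneg hc0
  -- distance bounds
  have hdist_xx : ‖x₀ - x‖ ≤ r := by
    have h1 : x₀ - x = proj n (p - X) := rfl
    have h2 : ‖proj n (p - X)‖ ≤ ‖p - X‖ := norm_proj_le n _
    have h3 : ‖p - X‖ < r := by
      rw [← dist_eq_norm, dist_comm]
      exact hXr
    rw [h1]; linarith
  -- infDist ≤ z₀ - φ(x₀)
  have hq : (WithLp.toLp 2 (Function.update p.ofLp (Fin.last n) (φ x₀)) : EuclideanSpace ℝ (Fin (n + 1))) ∈ graphBdry n φ := by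
    have hproj : proj n ((WithLp.toLp 2 (Function.update p.ofLp (Fin.last n) (φ x₀)) : EuclideanSpace ℝ (Fin (n + 1)))) = x₀ := by
      ext i
      exact Function.update_of_ne (Fin.castSucc_lt_last i).ne (φ x₀) p
    show (WithLp.toLp 2 (Function.update p.ofLp (Fin.last n) (φ x₀)) : EuclideanSpace ℝ (Fin (n + 1))) (Fin.last n)
      = φ (proj n ((WithLp.toLp 2 (Function.update p.ofLp (Fin.last n) (φ x₀)) : EuclideanSpace ℝ (Fin (n + 1)))))
    rw [hproj, PiLp.toLp_apply, Function.update_self]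
  have hplast : φ x₀ < p (Fin.last n) := hp
  have hdistq : dist p ((WithLp.toLp 2 (Function.update p.ofLp (Fin.last n) (φ x₀)) : EuclideanSpace ℝ (Fin (n + 1)))) = p (Fin.last n) - φ x₀ := by
    rw [EuclideanSpace.dist_eq, Fin.sum_univ_castSucc]
    have h0 : ∀ i : Fin n,
        dist (p (Fin.castSucc i)) ((WithLp.toLp 2 (Function.update p.ofLp (Fin.last n) (φ x₀)) : EuclideanSpace ℝ (Fin (n + 1))) (Fin.castSucc i)) = 0 := by
      intro i
      simp [Function.update_apply, (Fin.castSucc_lt_last i).ne]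
    simp only [h0]
    simp only [WithLp.ofLp_toLp, Function.update_self]
    simp [Real.dist_eq, Real.sqrt_sq_eq_abs, abs_of_nonneg (by linarith : (0:ℝ) ≤ p (Fin.last n) - φ x₀)]
  have hinf : infDist p (graphBdry n φ) ≤ p (Fin.last n) - φ x₀ := by
    rw [← hdistq]
    exact infDist_le_dist_of_mem hq
  -- Taylor estimate
  have htay := taylor_aux φ θ hφ hθmono hmod x x₀
  have hθbd : θ ‖x₀ - x‖ * ‖x₀ - x‖ ≤ θ r * r := by
    apply mul_le_mul (hθmono hdist_xx) hdist_xx (norm_nonneg _) (hθ0 r)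
  -- relate the sum to the inner product
  have hsum : ∑ i : Fin n, (x i - x₀ i) * g i = -⟪g, x₀ - x⟫ := by
    rw [PiLp.inner_apply, ← Finset.sum_neg_distrib]
    apply Finset.sum_congr rfl
    intro i _
    simp only [PiLp.sub_apply, RCLike.inner_apply, starRingEnd_apply, star_trivial]
    ring
  have hXlast : X (Fin.last n) = φ x := hXb
  rw [hsum, hXlast]
  have habs : |φ x₀ - φ x - ⟪g, x₀ - x⟫| ≤ θ r * r := le_trans htay hθbd
  have h1 : -(θ r * r) ≤ φ x₀ - φ x - ⟪g, x₀ - x⟫ := neg_le_of_abs_le habs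
  have h2 : r * θ r ≤ p (Fin.last n) - φ x₀ := le_trans hcrit hinf
  nlinarith
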